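/- Let θ : M_{2n}(ℂ) → M_{2n}(ℂ) be the map θ(X) = J Xᵀ J (note J = J^{−1}). Then the set 𝔨 = {X ∈ sp_{2n} : θ(X) = −X} is a Lie subalgebra of sp_{2n}, and 𝔨 equals the ℂ-linear span of the matrices G_{ij} = ε_i F_{ij} − ε_j F_{ji}, 1 ≤ i,j ≤ 2n. -/

import Mathlib

noncomputable section

set_option synthInstance.maxHeartbeats 1000000
set_option maxHeartbeats 1000000

namespace CI

open Matrix

def pr (n : ℕ) (i : Fin (2*n)) : Fin (2*n) := ⟨2*n - 1 - i.val, by have := i.isLt; omega⟩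

def eps (n : ℕ) (i : Fin (2*n)) : ℂ := if (i : ℕ) < n then 1 else -1

def E (n : ℕ) (i j : Fin (2*n)) : Matrix (Fin (2*n)) (Fin (2*n)) ℂ :=
  Matrix.single i j 1

/-- F_{ij} = e_{ij} − ε_i ε_j e_{j′ i′}. -/
def Fm (n : ℕ) (i j : Fin (2*n)) : Matrix (Fin (2*n)) (Fin (2*n)) ℂ :=
  E n i j - (eps n i * eps n j) • E n (pr n j) (pr n i)

/-- G_{ij} = ε_i F_{ij} − ε_j F_{ji}. -/
def Gm (n : ℕ) (i j : Fin (2*n)) : Matrix (Fin (2*n)) (Fin (2*n)) ℂ :=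
  eps n i • Fm n i j - eps n j • Fm n j i

/-- Ω = Σ_k ε_k e_{k k′}. -/
def Om (n : ℕ) : Matrix (Fin (2*n)) (Fin (2*n)) ℂ :=
  ∑ k, eps n k • E n k (pr n k)

/-- J = Σ_k ε_k e_{kk}. -/
def Jm (n : ℕ) : Matrix (Fin (2*n)) (Fin (2*n)) ℂ :=
  Matrix.diagonal (eps n)

/-- The symplectic Lie algebra sp_{2n} = { X : Ω Xᵀ Ω⁻¹ = −X }, as a set of matrices. -/
def sp (n : ℕ) : Set (Matrix (Fin (2*n)) (Fin (2*n)) ℂ) :=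
  {X | Om n * Xᵀ * (Om n)⁻¹ = -X}

/-- The −1 eigenspace 𝔨 = { X ∈ sp_{2n} : θ(X) = −X } of the involution θ(X) = J Xᵀ J. -/
def kSet (n : ℕ) : Set (Matrix (Fin (2*n)) (Fin (2*n)) ℂ) :=
  {X | X ∈ sp n ∧ Jm n * Xᵀ * Jm n = -X}

/- ### auxiliary lemmas -/

lemma pr_pr (n : ℕ) (i : Fin (2*n)) : pr n (pr n i) = i := by
  have := i.isLt
  simp only [pr]
  ext
  simp
  omega

lemma pr_inj_iff (n : ℕ) {x y : Fin (2*n)} : pr n x = pr n y ↔ x = y := by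
  constructor
  · intro h
    have := congrArg (pr n) h
    rwa [pr_pr, pr_pr] at this
  · rintro rfl; rfl

lemma pr_eq_iff (n : ℕ) {x y : Fin (2*n)} : pr n x = y ↔ x = pr n y := by
  constructor
  · rintro rfl; rw [pr_pr]
  · rintro rfl; rw [pr_pr]

lemma eps_pr (n : ℕ) (i : Fin (2*n)) : eps n (pr n i) = -eps n i := by
  have h := i.isLt
  simp only [eps, pr]
  by_cases h1 : 2*n - 1 - i.val < n <;> by_cases h2 : i.val < n <;>
    simp only [h1, h2, ↓reduceIte] <;> first | (exfalso; omega) | norm_num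

lemma eps_mul_self (n : ℕ) (i : Fin (2*n)) : eps n i * eps n i = 1 := by
  simp only [eps]; split_ifs <;> norm_num

lemma E_apply (n : ℕ) (i j a b : Fin (2*n)) :
    E n i j a b = if i = a ∧ j = b then 1 else 0 := by
  simp only [E, Matrix.single_apply]

lemma E_transpose (n : ℕ) (i j : Fin (2*n)) : (E n i j)ᵀ = E n j i := by
  ext a b
  simp only [Matrix.transpose_apply, E_apply]
  by_cases h1 : i = b <;> by_cases h2 : j = a <;> simp [h1, h2]

lemma Om_apply (n : ℕ) (i j : Fin (2*n)) :
    Om n i j = if j = pr n i then eps n i else 0 := by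
  simp only [Om, Matrix.sum_apply, Matrix.smul_apply, E_apply, smul_eq_mul]
  rw [Finset.sum_eq_single i]
  · by_cases h : j = pr n i
    · subst h; simp
    · simp [h, Ne.symm h]
  · intro k _ hk
    simp [hk]
  · simp

lemma Om_mul_apply (n : ℕ) (A : Matrix (Fin (2*n)) (Fin (2*n)) ℂ) (i j : Fin (2*n)) :
    (Om n * A) i j = eps n i * A (pr n i) j := by
  rw [Matrix.mul_apply, Finset.sum_eq_single (pr n i)]
  · rw [Om_apply, if_pos rfl]
  · intro k _ hk
    rw [Om_apply, if_neg hk, zero_mul]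
  · simp

lemma mul_Om_apply (n : ℕ) (A : Matrix (Fin (2*n)) (Fin (2*n)) ℂ) (i j : Fin (2*n)) :
    (A * Om n) i j = eps n (pr n j) * A i (pr n j) := by
  rw [Matrix.mul_apply, Finset.sum_eq_single (pr n j)]
  · rw [Om_apply, pr_pr, if_pos rfl, mul_comm]
  · intro k _ hk
    rw [Om_apply, if_neg, mul_zero]
    intro h
    exact hk (by rw [h, pr_pr])
  · simp

lemma Om_mul_Om (n : ℕ) : Om n * Om n = -1 := by
  ext i j
  rw [Om_mul_apply, Om_apply, pr_pr, eps_pr]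
  simp only [Matrix.neg_apply, Matrix.one_apply]
  by_cases h : i = j
  · subst h; simp [eps_mul_self]
  · simp [h, Ne.symm h]

lemma Om_inv (n : ℕ) : (Om n)⁻¹ = -(Om n) := by
  apply Matrix.inv_eq_right_inv
  rw [Matrix.mul_neg, Om_mul_Om, neg_neg]

lemma Jm_mul_apply (n : ℕ) (A : Matrix (Fin (2*n)) (Fin (2*n)) ℂ) (i j : Fin (2*n)) :
    (Jm n * A) i j = eps n i * A i j := by
  simp [Jm, Matrix.diagonal_mul]

lemma mul_Jm_apply (n : ℕ) (A : Matrix (Fin (2*n)) (Fin (2*n)) ℂ) (i j : Fin (2*n)) :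
    (A * Jm n) i j = A i j * eps n j := by
  simp [Jm, Matrix.mul_diagonal]

lemma Jm_mul_Jm (n : ℕ) : Jm n * Jm n = 1 := by
  ext i j
  rw [Jm_mul_apply]
  simp only [Jm, Matrix.diagonal_apply, Matrix.one_apply]
  by_cases h : i = j
  · subst h; simp [eps_mul_self]
  · simp [h]

lemma mem_kSet_iff' (n : ℕ) (X : Matrix (Fin (2*n)) (Fin (2*n)) ℂ) :
    X ∈ kSet n ↔ (Om n * Xᵀ * Om n = X ∧ Jm n * Xᵀ * Jm n = -X) := by
  unfold kSet sp
  simp only [Set.mem_setOf_eq, Om_inv, Matrix.mul_neg, neg_inj]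

lemma mem_kSet_iff (n : ℕ) (X : Matrix (Fin (2*n)) (Fin (2*n)) ℂ) :
    X ∈ kSet n ↔
      (∀ a b, X (pr n b) (pr n a) = -(eps n a * eps n b) * X a b) ∧
      (∀ a b, X b a = -(eps n a * eps n b) * X a b) := by
  rw [mem_kSet_iff']
  constructor
  · rintro ⟨h1, h2⟩
    constructor
    · intro a b
      have h := congrFun (congrFun h1 a) b
      rw [mul_Om_apply, Om_mul_apply, Matrix.transpose_apply, eps_pr] at h
      simp only [eps] at h ⊢
      split_ifs at h ⊢ <;> first | linear_combination h | linear_combination -h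
    · intro a b
      have h := congrFun (congrFun h2 a) b
      rw [mul_Jm_apply, Jm_mul_apply, Matrix.transpose_apply, Matrix.neg_apply] at h
      simp only [eps] at h ⊢
      split_ifs at h ⊢ <;> first | linear_combination h | linear_combination -h
  · rintro ⟨h1, h2⟩
    constructor
    · ext a b
      rw [mul_Om_apply, Om_mul_apply, Matrix.transpose_apply, eps_pr, h1 a b]
      simp only [eps]
      split_ifs <;> ring
    · ext a b
      rw [mul_Jm_apply, Jm_mul_apply, Matrix.transpose_apply, Matrix.neg_apply, h2 a b]
      simp only [eps]
      split_ifs <;> ring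

def Ksub (n : ℕ) : Submodule ℂ (Matrix (Fin (2*n)) (Fin (2*n)) ℂ) where
  carrier := kSet n
  add_mem' := by
    intro a b ha hb
    have ha' : a ∈ kSet n := ha
    have hb' : b ∈ kSet n := hb
    show a + b ∈ kSet n
    rw [mem_kSet_iff'] at ha' hb' ⊢
    replace ha := ha'; replace hb := hb'
    constructor
    · rw [Matrix.transpose_add, Matrix.mul_add, Matrix.add_mul, ha.1, hb.1]
    · rw [Matrix.transpose_add, Matrix.mul_add, Matrix.add_mul, ha.2, hb.2, neg_add]
  zero_mem' := by
    show (0 : Matrix (Fin (2*n)) (Fin (2*n)) ℂ) ∈ kSet n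
    rw [mem_kSet_iff']
    simp
  smul_mem' := by
    intro c X hX
    have hX' : X ∈ kSet n := hX
    show c • X ∈ kSet n
    rw [mem_kSet_iff'] at hX' ⊢
    replace hX := hX'
    constructor
    · rw [Matrix.transpose_smul, Matrix.mul_smul, Matrix.smul_mul, hX.1]
    · rw [Matrix.transpose_smul, Matrix.mul_smul, Matrix.smul_mul, hX.2, smul_neg]

lemma Gm_eq (n : ℕ) (i j : Fin (2*n)) : Gm n i j =
    eps n i • E n i j - eps n j • E n (pr n j) (pr n i)
    - eps n j • E n j i + eps n i • E n (pr n i) (pr n j) := by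
  unfold Gm Fm
  rw [smul_sub, smul_sub, smul_smul, smul_smul,
    show eps n i * (eps n i * eps n j) = eps n j from by rw [← mul_assoc, eps_mul_self, one_mul],
    show eps n j * (eps n j * eps n i) = eps n i from by rw [← mul_assoc, eps_mul_self, one_mul]]
  abel

lemma Gm_apply' (n : ℕ) (i j a b : Fin (2*n)) : Gm n i j a b =
    (if i = a ∧ j = b then eps n i else 0)
  - (if i = pr n b ∧ j = pr n a then eps n j else 0)
  - (if i = b ∧ j = a then eps n j else 0)
  + (if i = pr n a ∧ j = pr n b then eps n i else 0) := by
  rw [Gm_eq]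
  simp only [Matrix.sub_apply, Matrix.add_apply, Matrix.smul_apply, E_apply, smul_eq_mul,
    mul_ite, mul_one, mul_zero]
  rw [if_congr (show (pr n j = a ∧ pr n i = b) ↔ (i = pr n b ∧ j = pr n a) from by
        rw [pr_eq_iff, pr_eq_iff]; exact and_comm) rfl rfl,
      if_congr (show (pr n i = a ∧ pr n j = b) ↔ (i = pr n a ∧ j = pr n b) from by
        rw [pr_eq_iff, pr_eq_iff]) rfl rfl,
      if_congr (show (j = a ∧ i = b) ↔ (i = b ∧ j = a) from and_comm) rfl rfl]

lemma Gm_mem (n : ℕ) (i j : Fin (2*n)) : Gm n i j ∈ kSet n := by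
  rw [mem_kSet_iff]
  constructor <;> intro a b <;>
  · simp only [Gm_apply', pr_pr]
    simp only [eps, Fin.ext_iff, pr]
    split_ifs <;> first | (exfalso; omega) | ring

lemma key_sum (n : ℕ) (X : Matrix (Fin (2*n)) (Fin (2*n)) ℂ)
    (h1 : ∀ a b, X (pr n b) (pr n a) = -(eps n a * eps n b) * X a b)
    (h2 : ∀ a b, X b a = -(eps n a * eps n b) * X a b) :
    ∑ p : Fin (2*n) × Fin (2*n), (eps n p.1 * X p.1 p.2) • Gm n p.1 p.2 = (4:ℂ) • X := by
  ext a b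
  rw [Matrix.sum_apply]
  simp only [Matrix.smul_apply, smul_eq_mul, Gm_apply']
  simp only [mul_sub, mul_add]
  rw [Finset.sum_add_distrib, Finset.sum_sub_distrib, Finset.sum_sub_distrib]
  have S1 : ∑ p : Fin (2*n) × Fin (2*n),
      (eps n p.1 * X p.1 p.2) * (if p.1 = a ∧ p.2 = b then eps n p.1 else 0)
      = (eps n a * X a b) * eps n a := by
    rw [Finset.sum_eq_single (a, b)]
    · simp
    · intro p _ hp
      rw [if_neg, mul_zero]
      rintro ⟨hx, hy⟩
      exact hp (Prod.ext hx hy)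
    · simp
  have S2 : ∑ p : Fin (2*n) × Fin (2*n),
      (eps n p.1 * X p.1 p.2) * (if p.1 = pr n b ∧ p.2 = pr n a then eps n p.2 else 0)
      = (eps n (pr n b) * X (pr n b) (pr n a)) * eps n (pr n a) := by
    rw [Finset.sum_eq_single (pr n b, pr n a)]
    · simp
    · intro p _ hp
      rw [if_neg, mul_zero]
      rintro ⟨hx, hy⟩
      exact hp (Prod.ext hx hy)
    · simp
  have S3 : ∑ p : Fin (2*n) × Fin (2*n),
      (eps n p.1 * X p.1 p.2) * (if p.1 = b ∧ p.2 = a then eps n p.2 else 0)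
      = (eps n b * X b a) * eps n a := by
    rw [Finset.sum_eq_single (b, a)]
    · simp
    · intro p _ hp
      rw [if_neg, mul_zero]
      rintro ⟨hx, hy⟩
      exact hp (Prod.ext hx hy)
    · simp
  have S4 : ∑ p : Fin (2*n) × Fin (2*n),
      (eps n p.1 * X p.1 p.2) * (if p.1 = pr n a ∧ p.2 = pr n b then eps n p.1 else 0)
      = (eps n (pr n a) * X (pr n a) (pr n b)) * eps n (pr n a) := by
    rw [Finset.sum_eq_single (pr n a, pr n b)]
    · simp
    · intro p _ hp
      rw [if_neg, mul_zero]
      rintro ⟨hx, hy⟩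
      exact hp (Prod.ext hx hy)
    · simp
  rw [S1, S2, S3, S4]
  simp only [eps_pr]
  rw [h1 a b, h1 b a, h2 a b]
  simp only [eps]
  split_ifs <;> ring

/-- 𝔨 is a Lie subalgebra of sp_{2n}, and it equals the ℂ-linear span
    of the matrices G_{ij}. -/
theorem kSet_lie_subalgebra_and_span (n : ℕ) (hn : 2 ≤ n) :
    (∀ X ∈ kSet n, ∀ Y ∈ kSet n, X * Y - Y * X ∈ kSet n) ∧
    (↑(Submodule.span ℂ (Set.range fun p : Fin (2*n) × Fin (2*n) => Gm n p.1 p.2))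
      = kSet n) := by
  constructor
  · intro X hX Y hY
    rw [mem_kSet_iff'] at hX hY ⊢
    obtain ⟨hX1, hX2⟩ := hX
    obtain ⟨hY1, hY2⟩ := hY
    have keyOm : ∀ A B : Matrix (Fin (2*n)) (Fin (2*n)) ℂ,
        Om n * Aᵀ * Om n = A → Om n * Bᵀ * Om n = B →
        Om n * (Aᵀ * Bᵀ) * Om n = -(A * B) := by
      intro A B hA hB
      have h : Om n * (Aᵀ * Bᵀ) * Om n = -((Om n * Aᵀ * Om n) * (Om n * Bᵀ * Om n)) := by
        have hOm := Om_mul_Om n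
        have h2 : Om n * (Om n * (Bᵀ * Om n)) = -(Bᵀ * Om n) := by
          rw [← Matrix.mul_assoc, hOm, Matrix.neg_mul, Matrix.one_mul]
        simp only [Matrix.mul_assoc]
        rw [h2]
        simp [Matrix.mul_neg]
      rw [h, hA, hB]
    have keyJm : ∀ A B : Matrix (Fin (2*n)) (Fin (2*n)) ℂ,
        Jm n * (Aᵀ * Bᵀ) * Jm n = (Jm n * Aᵀ * Jm n) * (Jm n * Bᵀ * Jm n) := by
      intro A B
      have hJ := Jm_mul_Jm n
      have h2 : Jm n * (Jm n * (Bᵀ * Jm n)) = Bᵀ * Jm n := by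
        rw [← Matrix.mul_assoc, hJ, Matrix.one_mul]
      simp only [Matrix.mul_assoc]
      rw [h2]
    constructor
    · rw [Matrix.transpose_sub, Matrix.transpose_mul, Matrix.transpose_mul,
        Matrix.mul_sub, Matrix.sub_mul, keyOm Y X hY1 hX1, keyOm X Y hX1 hY1]
      abel
    · rw [Matrix.transpose_sub, Matrix.transpose_mul, Matrix.transpose_mul,
        Matrix.mul_sub, Matrix.sub_mul, keyJm Y X, keyJm X Y, hX2, hY2]
      simp only [Matrix.neg_mul, Matrix.mul_neg, neg_neg]
      abel
  · have hle : Submodule.span ℂ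
        (Set.range fun p : Fin (2*n) × Fin (2*n) => Gm n p.1 p.2) ≤ Ksub n := by
      rw [Submodule.span_le]
      rintro _ ⟨p, rfl⟩
      exact Gm_mem n p.1 p.2
    have hge : Ksub n ≤ Submodule.span ℂ
        (Set.range fun p : Fin (2*n) × Fin (2*n) => Gm n p.1 p.2) := by
      intro X hX
      have hX' : X ∈ kSet n := hX
      rw [mem_kSet_iff] at hX'
      have hsum := key_sum n X hX'.1 hX'.2
      have hXeq : X = (4⁻¹ : ℂ) • ∑ p : Fin (2*n) × Fin (2*n),
          (eps n p.1 * X p.1 p.2) • Gm n p.1 p.2 := by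
        rw [hsum, smul_smul]
        norm_num
      rw [hXeq]
      refine Submodule.smul_mem _ _ (Submodule.sum_mem _ fun p _ => ?_)
      exact Submodule.smul_mem _ _ (Submodule.subset_span ⟨p, rfl⟩)
    have : Submodule.span ℂ
        (Set.range fun p : Fin (2*n) × Fin (2*n) => Gm n p.1 p.2) = Ksub n :=
      le_antisymm hle hge
    rw [this]
    rfl

end CI
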